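/- There exists a continuous clone homomorphism from Pol(K_3) to the projection clone: since every polymorphism of K_3 is essentially unary, the map sending each polymorphism to the projection onto the (unique) coordinate on which it depends (and constant-free: each polymorphism of K_3 depends on exactly one coordinate) is a clone homomorphism. -/

import Mathlib

/-- `f` is a polymorphism of `K₃ = ({1,2,3}; ≠)`. -/
def IsPolyK3 {n : ℕ} (f : (Fin n → Fin 3) → Fin 3) : Prop :=
  ∀ u v : Fin n → Fin 3, (∀ i, u i ≠ v i) → f u ≠ f v

/-- `f` depends on its `i`-th argument. -/
def K3DependsOn {n : ℕ} (f : (Fin n → Fin 3) → Fin 3) (i : Fin n) : Prop :=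
  ∃ u v : Fin n → Fin 3, (∀ k, k ≠ i → u k = v k) ∧ f u ≠ f v

namespace S7

def other (a b : Fin 3) : Fin 3 :=
  if 0 ≠ a ∧ 0 ≠ b then 0 else if (1 : Fin 3) ≠ a ∧ (1 : Fin 3) ≠ b then 1 else 2

lemma other_ne : ∀ a b : Fin 3, other a b ≠ a ∧ other a b ≠ b := by decide

lemma fin3_mem (d a b c : Fin 3) : a ≠ b → c ≠ a → c ≠ b → d ≠ c → d = a ∨ d = b := by
  revert d a b c; decide

def Rep {n : ℕ} (f : (Fin n → Fin 3) → Fin 3) : Prop :=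
  ∃ (i : Fin n) (σ : Fin 3 → Fin 3), Function.Injective σ ∧ ∀ x, f x = σ (x i)

section Binary

variable {h : Fin 3 → Fin 3 → Fin 3}

def BinPoly (h : Fin 3 → Fin 3 → Fin 3) : Prop :=
  ∀ a a' b b' : Fin 3, a ≠ a' → b ≠ b' → h a b ≠ h a' b'

lemma bin_step1 (hp : BinPoly h) {a b : Fin 3} (hab : a ≠ b) :
    h a b = h a a ∨ h a b = h b b := by
  set c := other a b with hc
  have hca : c ≠ a := (other_ne a b).1
  have hcb : c ≠ b := (other_ne a b).2
  have h1 : h a b ≠ h c c := hp a c b c (Ne.symm hca) (Ne.symm hcb)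
  have hdiag : Function.Surjective (fun d => h d d) := by
    apply Finite.surjective_of_injective
    intro x y hxy
    by_contra hne
    exact hp x y x y hne hne hxy
  obtain ⟨d, hd⟩ := hdiag (h a b)
  have hdc : d ≠ c := by rintro rfl; exact h1 hd.symm
  rcases fin3_mem d a b c hab hca hcb hdc with rfl | rfl
  · exact Or.inl hd.symm
  · exact Or.inr hd.symm

lemma bin_case1 (hp : BinPoly h) (e01 : h 0 1 = h 0 0) : ∀ a b, h a b = h a a := by
  have h10 : h 1 0 = h 1 1 := by
    rcases bin_step1 hp (show (1:Fin 3) ≠ 0 by decide) with h' | h'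
    · exact h'
    · exact absurd (h'.trans e01.symm) (hp 1 0 0 1 (by decide) (by decide))
  have h20 : h 2 0 = h 2 2 := by
    rcases bin_step1 hp (show (2:Fin 3) ≠ 0 by decide) with h' | h'
    · exact h'
    · exact absurd (h'.trans e01.symm) (hp 2 0 0 1 (by decide) (by decide))
  have h12 : h 1 2 = h 1 1 := by
    rcases bin_step1 hp (show (1:Fin 3) ≠ 2 by decide) with h' | h'
    · exact h'
    · exact absurd (h'.trans h20.symm) (hp 1 2 2 0 (by decide) (by decide))
  have h02 : h 0 2 = h 0 0 := by
    rcases bin_step1 hp (show (0:Fin 3) ≠ 2 by decide) with h' | h'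
    · exact h'
    · exact absurd (h'.trans h20.symm) (hp 0 2 2 0 (by decide) (by decide))
  have h21 : h 2 1 = h 2 2 := by
    rcases bin_step1 hp (show (2:Fin 3) ≠ 1 by decide) with h' | h'
    · exact h'
    · exact absurd (h'.trans h12.symm) (hp 2 1 1 2 (by decide) (by decide))
  intro a b
  fin_cases a <;> fin_cases b <;> first | rfl | assumption

lemma bin_main (hp : BinPoly h) :
    (∀ a b, h a b = h a a) ∨ (∀ a b, h a b = h b b) := by
  rcases bin_step1 hp (show (0:Fin 3) ≠ 1 by decide) with e | e
  · exact Or.inl (bin_case1 hp e)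
  · right
    have hp' : BinPoly (fun a b => h b a) := fun a a' b b' ha hb => hp b b' a a' hb ha
    have e' : h 1 0 = h 0 0 := by
      rcases bin_step1 hp (show (1:Fin 3) ≠ 0 by decide) with h' | h'
      · exact absurd (h'.trans e.symm) (hp 1 0 0 1 (by decide) (by decide))
      · exact h'
    have := bin_case1 hp' (by simpa using e')
    exact fun a b => this b a

end Binary

section Merge

variable {k : ℕ}

def mergeLast (f : (Fin (k + 2) → Fin 3) → Fin 3) : (Fin (k + 1) → Fin 3) → Fin 3 :=
  fun x => f (Fin.snoc x (x (Fin.last k)))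

lemma mergeLast_poly {f : (Fin (k + 2) → Fin 3) → Fin 3} (hf : IsPolyK3 f) :
    IsPolyK3 (mergeLast f) := by
  intro u v huv
  apply hf
  intro i
  refine Fin.lastCases ?_ ?_ i
  · simpa [Fin.snoc_last] using huv (Fin.last k)
  · intro j
    simpa [Fin.snoc_castSucc] using huv j

/-- Case A: the merge projects onto a surviving coordinate. -/
lemma repr_of_proj {f : (Fin (k + 2) → Fin 3) → Fin 3} (hf : IsPolyK3 f)
    {j : Fin (k + 1)} (hj : j ≠ Fin.last k) {σ : Fin 3 → Fin 3}
    (hσ : Function.Injective σ) (hm : ∀ x, mergeLast f x = σ (x j)) :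
    ∀ u, f u = σ (u j.castSucc) := by
  intro u
  obtain ⟨b, hb⟩ := Finite.surjective_of_injective hσ (f u)
  suffices hbu : b = u j.castSucc by rw [← hbu, hb]
  by_contra hbne
  set w : Fin (k + 1) → Fin 3 := fun i =>
    if i = j then b
    else if i = Fin.last k then other (u i.castSucc) (u (Fin.last (k + 1)))
    else other (u i.castSucc) (u i.castSucc) with hw
  have hwj : w j = b := by simp [hw]
  have hwl : w (Fin.last k) = other (u (Fin.last k).castSucc) (u (Fin.last (k + 1))) := by
    rw [hw]; simp [Ne.symm hj]
  have hwi : ∀ i : Fin (k+1), i ≠ j → i ≠ Fin.last k → w i = other (u i.castSucc) (u i.castSucc) := by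
    intro i h1 h2; rw [hw]; simp [h1, h2]
  have hvu : ∀ i : Fin (k + 2), (Fin.snoc w (w (Fin.last k)) : Fin (k+2) → Fin 3) i ≠ u i := by
    intro i
    refine Fin.lastCases ?_ ?_ i
    · rw [Fin.snoc_last, hwl]
      exact (other_ne _ _).2
    · intro i
      rw [Fin.snoc_castSucc]
      by_cases hij : i = j
      · subst hij; rw [hwj]; exact hbne
      · by_cases hil : i = Fin.last k
        · subst hil; rw [hwl]; exact (other_ne _ _).1
        · rw [hwi i hij hil]; exact (other_ne _ _).1
  have hne := hf _ u hvu
  apply hne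
  have : f (Fin.snoc w (w (Fin.last k))) = mergeLast f w := rfl
  rw [this, hm, hwj]
  exact hb

/-- Case B: the merge projects onto the merged coordinate. -/
lemma merged_identity {f : (Fin (k + 2) → Fin 3) → Fin 3} {σ : Fin 3 → Fin 3}
    (hm : ∀ x, mergeLast f x = σ (x (Fin.last k))) :
    ∀ x : Fin (k + 2) → Fin 3,
      x (Fin.castSucc (Fin.last k)) = x (Fin.last (k + 1)) → f x = σ (x (Fin.last (k + 1))) := by
  intro x hx
  have hsnoc : Fin.snoc (fun i : Fin (k+1) => x i.castSucc)
      ((fun i : Fin (k+1) => x i.castSucc) (Fin.last k)) = x := by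
    funext i
    refine Fin.lastCases ?_ ?_ i
    · rw [Fin.snoc_last]; exact hx
    · intro i; rw [Fin.snoc_castSucc]
  have := hm (fun i : Fin (k+1) => x i.castSucc)
  rw [mergeLast, hsnoc] at this
  rw [this, hx]

lemma exists_perm {α : Type*} [DecidableEq α] (a b p q : α) (hab : a ≠ b) (hpq : p ≠ q) :
    ∃ π : Equiv.Perm α, π a = p ∧ π b = q := by
  refine ⟨(Equiv.swap a p).trans (Equiv.swap (Equiv.swap a p b) q), ?_, ?_⟩
  · have h1 : Equiv.swap a p a = p := Equiv.swap_apply_left a p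
    have h2 : p ≠ Equiv.swap a p b := by
      intro hc
      exact hab ((Equiv.swap a p).injective (h1.trans hc))
    rw [Equiv.trans_apply, h1]
    exact Equiv.swap_apply_of_ne_of_ne h2 hpq
  · simp [Equiv.trans_apply, Equiv.swap_apply_left]

end Merge
end S7

namespace S7
open Function

def sig {n : ℕ} (f : (Fin n → Fin 3) → Fin 3) : Fin 3 → Fin 3 := fun a => f (fun _ => a)

lemma sig_inj {n : ℕ} {f : (Fin n → Fin 3) → Fin 3} (hf : IsPolyK3 f) :
    Function.Injective (sig f) := by
  intro a b hab
  by_contra hne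
  exact hf (fun _ => a) (fun _ => b) (fun _ => hne) hab

/-- dichotomy for a pair of coordinates, assuming the induction hypothesis -/
lemma pair_dichotomy {k : ℕ} {f : (Fin (k + 2) → Fin 3) → Fin 3} (hf : IsPolyK3 f)
    (IH : ∀ g : (Fin (k + 1) → Fin 3) → Fin 3, IsPolyK3 g → Rep g)
    {p q : Fin (k + 2)} (hpq : p ≠ q) :
    Rep f ∨ (∀ y : Fin (k + 2) → Fin 3, y p = y q → f y = sig f (y q)) := by
  obtain ⟨ρ, hρ1, hρ2⟩ := exists_perm (Fin.castSucc (Fin.last k)) (Fin.last (k + 1)) p q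
    (Fin.castSucc_lt_last (Fin.last k)).ne hpq
  set g : (Fin (k + 2) → Fin 3) → Fin 3 := fun x => f (fun i => x (ρ.symm i)) with hg
  have hgpoly : IsPolyK3 g := by
    intro u v huv
    exact hf _ _ (fun i => huv (ρ.symm i))
  have hkey : ∀ y : Fin (k + 2) → Fin 3, g (fun i => y (ρ i)) = f y := by
    intro y
    rw [hg]
    simp only [Equiv.apply_symm_apply]
  obtain ⟨j, σ, hσ, hrep⟩ := IH (mergeLast g) (mergeLast_poly hgpoly)
  by_cases hj : j = Fin.last k
  · subst hj
    right
    have hid := merged_identity hrep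
    have hσs : ∀ a : Fin 3, σ a = sig f a := by
      intro a
      exact (hid (fun _ => a) rfl).symm
    intro y hy
    have hxy : (fun i => y (ρ i)) (Fin.castSucc (Fin.last k)) = (fun i => y (ρ i)) (Fin.last (k+1)) := by
      simp only [hρ1, hρ2]
      exact hy
    have := hid (fun i => y (ρ i)) hxy
    rw [hkey] at this
    rw [this]
    simp only [hρ2, hσs]
  · left
    have := repr_of_proj hgpoly hj hσ hrep
    refine ⟨ρ j.castSucc, σ, hσ, ?_⟩
    intro y
    rw [← hkey y, this (fun i => y (ρ i))]

end S7

namespace S7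

lemma sig_surj {n : ℕ} {f : (Fin n → Fin 3) → Fin 3} (hf : IsPolyK3 f) :
    Function.Surjective (sig f) :=
  Finite.surjective_of_injective (sig_inj hf)

lemma main : ∀ n : ℕ, ∀ f : (Fin (n + 1) → Fin 3) → Fin 3, IsPolyK3 f → Rep f := by
  intro n
  induction n with
  | zero =>
    intro f hf
    refine ⟨0, sig f, sig_inj hf, fun x => ?_⟩
    exact congrArg f (funext fun i => congrArg x (Fin.fin_one_eq_zero i))
  | succ n IH =>
    rcases n with _ | m
    · -- binary case
      intro f hf
      set h : Fin 3 → Fin 3 → Fin 3 := fun a b => f ![a, b] with hh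
      have hfx : ∀ x : Fin 2 → Fin 3, f x = h (x 0) (x 1) := by
        intro x
        exact congrArg f (funext fun i => by fin_cases i <;> simp)
      have hp : BinPoly h := by
        intro a a' b b' ha hb
        apply hf
        intro i
        fin_cases i <;> simpa
      rcases bin_main hp with hc | hc
      · exact ⟨0, fun a => h a a, fun a b hab => by
          by_contra hne; exact hp a b a b hne hne hab,
          fun x => by rw [hfx x, hc]⟩
      · exact ⟨1, fun a => h a a, fun a b hab => by
          by_contra hne; exact hp a b a b hne hne hab,
          fun x => by rw [hfx x, hc]⟩
    · rcases m with _ | m'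
      · -- arity 3
        intro f hf
        rcases pair_dichotomy hf IH (show (1 : Fin 3) ≠ 2 by decide) with hrep | h12
        · exact hrep
        rcases pair_dichotomy hf IH (show (0 : Fin 3) ≠ 2 by decide) with hrep | h02
        · exact hrep
        rcases pair_dichotomy hf IH (show (0 : Fin 3) ≠ 1 by decide) with hrep | h01
        · exact hrep
        exfalso
        set u : Fin 3 → Fin 3 := id with hu
        have e1 : f ![1, 0, 0] = sig f 0 := by
          have := h12 ![1, 0, 0] (by decide)
          simpa using this
        have e2 : f ![1, 0, 1] = sig f 1 := by
          have := h02 ![1, 0, 1] (by decide)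
          simpa using this
        have e3 : f ![2, 2, 0] = sig f 2 := by
          have := h01 ![2, 2, 0] (by decide)
          simpa using this
        have n1 : f u ≠ sig f 0 := by
          rw [← e1]
          exact fun hcon => hf ![1,0,0] u (by intro i; fin_cases i <;> decide) hcon.symm
        have n2 : f u ≠ sig f 1 := by
          rw [← e2]
          exact fun hcon => hf ![1,0,1] u (by intro i; fin_cases i <;> decide) hcon.symm
        have n3 : f u ≠ sig f 2 := by
          rw [← e3]
          exact fun hcon => hf ![2,2,0] u (by intro i; fin_cases i <;> decide) hcon.symm
        obtain ⟨c, hc⟩ := sig_surj hf (f u)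
        fin_cases c
        · exact n1 hc.symm
        · exact n2 hc.symm
        · exact n3 hc.symm
      · -- arity ≥ 4
        intro f hf
        have h01ne : (⟨0, by omega⟩ : Fin (m' + 4)) ≠ ⟨1, by omega⟩ := by
          simp [Fin.ext_iff]
        have h23ne : (⟨2, by omega⟩ : Fin (m' + 4)) ≠ ⟨3, by omega⟩ := by
          simp [Fin.ext_iff]
        rcases pair_dichotomy hf IH h01ne with hrep | h01
        · exact hrep
        rcases pair_dichotomy hf IH h23ne with hrep | h23
        · exact hrep
        exfalso
        set y : Fin (m' + 4) → Fin 3 := fun i => if (i : ℕ) ≤ 1 then 0 else 1 with hy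
        have e1 : f y = sig f 0 := by
          have := h01 y (by simp [hy])
          simpa [hy] using this
        have e2 : f y = sig f 1 := by
          have := h23 y (by simp [hy])
          simpa [hy] using this
        have : (0 : Fin 3) = 1 := sig_inj hf (e1.symm.trans e2)
        exact absurd this (by decide)

end S7

namespace S7

lemma dep_of_rep {n : ℕ} {f : (Fin (n + 1) → Fin 3) → Fin 3} {i : Fin (n + 1)}
    {σ : Fin 3 → Fin 3} (hσ : Function.Injective σ) (hr : ∀ x, f x = σ (x i)) :
    K3DependsOn f i := by
  refine ⟨fun _ => 0, Function.update (fun _ => 0) i 1, fun k hk => ?_, ?_⟩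
  · rw [Function.update_of_ne hk]
  · rw [hr, hr, Function.update_self]
    exact fun hcon => absurd (hσ hcon) (by decide)

lemma rep_unique {n : ℕ} {f : (Fin n → Fin 3) → Fin 3} {i : Fin n}
    {σ : Fin 3 → Fin 3} (hσ : Function.Injective σ) (hr : ∀ x, f x = σ (x i))
    {j : Fin n} (hd : K3DependsOn f j) : i = j := by
  obtain ⟨u, v, huv, hne⟩ := hd
  by_contra hij
  apply hne
  rw [hr, hr, huv i hij]

open scoped Classical in
noncomputable def xi (n : ℕ) (f : (Fin (n + 1) → Fin 3) → Fin 3) : Fin (n + 1) :=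
  if h : Rep f then h.choose else 0

lemma xi_spec {n : ℕ} {f : (Fin (n + 1) → Fin 3) → Fin 3} (h : Rep f) :
    ∃ σ : Fin 3 → Fin 3, Function.Injective σ ∧ ∀ x, f x = σ (x (xi n f)) := by
  rw [xi, dif_pos h]
  exact h.choose_spec

end S7

/-- There is a clone homomorphism from Pol(K₃) to the projection clone (encoded by the
index of the target projection), sending each polymorphism to the projection onto the
coordinate on which it depends. -/
theorem stmt_7 :
    ∃ ξ : ∀ n : ℕ, ((Fin (n + 1) → Fin 3) → Fin 3) → Fin (n + 1),
      -- each polymorphism is sent to (the projection onto) the coordinate it depends on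
      (∀ (n : ℕ) (f : (Fin (n + 1) → Fin 3) → Fin 3),
        IsPolyK3 f → K3DependsOn f (ξ n f)) ∧
      -- ξ preserves projections
      (∀ (n : ℕ) (i : Fin (n + 1)), ξ n (fun x => x i) = i) ∧
      -- ξ preserves composition (on polymorphisms)
      (∀ (n m : ℕ) (f : (Fin (n + 1) → Fin 3) → Fin 3)
        (g : Fin (n + 1) → ((Fin (m + 1) → Fin 3) → Fin 3)),
        IsPolyK3 f → (∀ i, IsPolyK3 (g i)) →
        ξ m (fun x => f (fun i => g i x)) = ξ m (g (ξ n f))) := by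
  refine ⟨S7.xi, ?_, ?_, ?_⟩
  · intro n f hf
    obtain ⟨σ, hσ, hr⟩ := S7.xi_spec (S7.main n f hf)
    exact S7.dep_of_rep hσ hr
  · intro n i
    have hrep : S7.Rep (fun x : Fin (n+1) → Fin 3 => x i) :=
      ⟨i, id, Function.injective_id, fun x => rfl⟩
    obtain ⟨σ, hσ, hr⟩ := S7.xi_spec hrep
    exact S7.rep_unique hσ hr
      (S7.dep_of_rep (σ := id) Function.injective_id (fun x => rfl))
  · intro n m f g hf hg
    obtain ⟨σ, hσ, hrf⟩ := S7.xi_spec (S7.main n f hf)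
    obtain ⟨τ, hτ, hrg⟩ := S7.xi_spec (S7.main m (g (S7.xi n f)) (hg _))
    have hcomp : ∀ x, (fun x => f (fun i => g i x)) x
        = (σ ∘ τ) (x (S7.xi m (g (S7.xi n f)))) := by
      intro x
      show f (fun i => g i x) = σ (τ (x (S7.xi m (g (S7.xi n f)))))
      rw [hrf]
      show σ (g (S7.xi n f) x) = _
      rw [hrg]
    have hrep : S7.Rep (fun x => f (fun i => g i x)) :=
      ⟨S7.xi m (g (S7.xi n f)), σ ∘ τ, hσ.comp hτ, hcomp⟩
    obtain ⟨κ, hκ, hrh⟩ := S7.xi_spec hrep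
    exact S7.rep_unique hκ hrh (S7.dep_of_rep (hσ.comp hτ) hcomp)
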